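/- Closeness of post-selected (conditioned) distributions: let D_0 and D_1 be sub-probability distributions on a set Ω ∪ {fail} with D_0(fail) = 1 − p_0 and D_1(fail) = 1 − p_1, where p_0, p_1 ≥ 1/m − δ and the total variation distance between D_0 and D_1 is at most δ, with m ≥ 1 and δ < 1/m. Then the total variation distance between the conditional distributions D_0(·| not fail) and D_1(·| not fail) is at most 2mδ/(1 − mδ). -/

import Mathlib

/-- Closeness of post-selected (conditioned) distributions.  `D0, D1` are
distributions on `Ω ∪ {fail}` (modeled as `Option Ω`, `none` = fail) with
non-fail probabilities `p_b = 1 − D_b(fail) ≥ 1/m − δ`, total variation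
distance at most `δ`, `m ≥ 1` and `δ < 1/m`.  Then the total variation
distance between the conditional distributions `D_b(·|not fail)` is at most
`2mδ/(1 − mδ)`. -/
theorem postselected_distributions_close
    {Ω : Type} [Fintype Ω]
    (D0 D1 : Option Ω → ℝ) (m δ : ℝ)
    (hD0nonneg : ∀ ω, 0 ≤ D0 ω) (hD1nonneg : ∀ ω, 0 ≤ D1 ω)
    (hD0sum : ∑ ω : Option Ω, D0 ω = 1) (hD1sum : ∑ ω : Option Ω, D1 ω = 1)
    (hm : 1 ≤ m) (hδ0 : 0 ≤ δ) (hδ : δ < 1 / m)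
    (hp0 : 1 / m - δ ≤ 1 - D0 none)
    (hp1 : 1 / m - δ ≤ 1 - D1 none)
    (hTV : (1 / 2) * ∑ ω : Option Ω, |D0 ω - D1 ω| ≤ δ) :
    (1 / 2) * ∑ ω : Ω, |D0 (some ω) / (1 - D0 none) - D1 (some ω) / (1 - D1 none)|
      ≤ 2 * m * δ / (1 - m * δ) := by
  have hm0 : (0:ℝ) < m := lt_of_lt_of_le one_pos hm
  have h1m : (0:ℝ) < 1 / m - δ := sub_pos.2 hδ
  set p0 := 1 - D0 none with hp0def
  set p1 := 1 - D1 none with hp1def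
  have hp0pos : 0 < p0 := lt_of_lt_of_le h1m hp0
  have hp1pos : 0 < p1 := lt_of_lt_of_le h1m hp1
  set S := ∑ ω : Ω, |D0 (some ω) - D1 (some ω)| with hS
  set a := |D0 none - D1 none| with ha
  -- sum over Option splits
  have hsplit : ∀ f : Option Ω → ℝ,
      ∑ ω : Option Ω, f ω = f none + ∑ ω : Ω, f (some ω) := fun f => by
    simp [Fintype.sum_option]
  have hsumD1 : ∑ ω : Ω, D1 (some ω) = p1 := by
    have := hsplit D1
    rw [hD1sum] at this
    linarith
  have hSa : a + S ≤ 2 * δ := by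
    have := hsplit (fun ω => |D0 ω - D1 ω|)
    rw [this] at hTV
    simp only [← hS, ← ha] at hTV
    linarith
  have hSnonneg : 0 ≤ S := Finset.sum_nonneg fun _ _ => abs_nonneg _
  have hanonneg : 0 ≤ a := abs_nonneg _
  -- pointwise bound
  have hpt : ∀ ω : Ω, |D0 (some ω) / p0 - D1 (some ω) / p1|
      ≤ |D0 (some ω) - D1 (some ω)| / p0 + D1 (some ω) * a / (p0 * p1) := by
    intro ω
    have heq : D0 (some ω) / p0 - D1 (some ω) / p1
        = (D0 (some ω) - D1 (some ω)) / p0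
          + D1 (some ω) * (p1 - p0) / (p0 * p1) := by
      field_simp
      ring
    rw [heq]
    refine (abs_add_le _ _).trans ?_
    have h1 : |(D0 (some ω) - D1 (some ω)) / p0| = |D0 (some ω) - D1 (some ω)| / p0 := by
      rw [abs_div, abs_of_pos hp0pos]
    have hpa : |p1 - p0| = a := by
      rw [ha]
      have : p1 - p0 = D0 none - D1 none := by rw [hp0def, hp1def]; ring
      rw [this]
    have h2 : |D1 (some ω) * (p1 - p0) / (p0 * p1)| = D1 (some ω) * a / (p0 * p1) := by
      rw [abs_div, abs_mul, abs_of_nonneg (hD1nonneg _), hpa,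
        abs_of_pos (mul_pos hp0pos hp1pos)]
    rw [h1, h2]
  -- sum the pointwise bound
  have hsum : ∑ ω : Ω, |D0 (some ω) / p0 - D1 (some ω) / p1|
      ≤ S / p0 + a / p0 := by
    calc ∑ ω : Ω, |D0 (some ω) / p0 - D1 (some ω) / p1|
        ≤ ∑ ω : Ω, (|D0 (some ω) - D1 (some ω)| / p0 + D1 (some ω) * a / (p0 * p1)) :=
          Finset.sum_le_sum fun ω _ => hpt ω
      _ = S / p0 + a / p0 := by
          rw [Finset.sum_add_distrib, ← Finset.sum_div]
          simp only [mul_div_assoc, ← Finset.sum_mul, hsumD1]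
          rw [← hS]
          congr 1
          field_simp
  have hhalf : (1/2 : ℝ) * ∑ ω : Ω, |D0 (some ω) / p0 - D1 (some ω) / p1| ≤ δ / p0 := by
    have : (1/2 : ℝ) * (S / p0 + a / p0) ≤ δ / p0 := by
      rw [← add_div,
        show (1:ℝ)/2 * ((S + a) / p0) = ((S + a)/2) / p0 by ring]
      gcongr
      linarith
    linarith [mul_le_mul_of_nonneg_left hsum (by norm_num : (0:ℝ) ≤ 1/2)]
  have hfin : δ / p0 ≤ 2 * m * δ / (1 - m * δ) := by
    have hmδ : m * δ < 1 := by
      have := (lt_div_iff₀ hm0).mp hδ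
      linarith
    have h1mδ : 0 < 1 - m * δ := by linarith
    have hstep : δ / p0 ≤ δ / (1/m - δ) :=
      div_le_div_of_nonneg_left hδ0 h1m hp0
    have heq : δ / (1/m - δ) = m * δ / (1 - m * δ) := by
      rw [div_eq_div_iff h1m.ne' h1mδ.ne']
      field_simp
    have hlast : m * δ / (1 - m * δ) ≤ 2 * m * δ / (1 - m * δ) := by
      gcongr
      nlinarith
    calc δ / p0 ≤ δ / (1/m - δ) := hstep
      _ = m * δ / (1 - m * δ) := heq
      _ ≤ 2 * m * δ / (1 - m * δ) := hlast
  linarith
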